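/- Let γ > 0 be a real number, let g be the constant function g(x) = γ, and let d : ℝ → ℝ be any function. Then for every odd integer n ≥ 1 and every x ∈ ℝ, the generalized Fibonacci polynomial of Fibonacci type satisfies 𝓕ₙ(x) ≥ γ^{(n−1)/2} > 0; in particular 𝓕ₙ has no real roots when n is odd. -/
import Mathlib


/-- Generalized Fibonacci polynomials of Fibonacci type:
`𝓕₀ = 0`, `𝓕₁ = 1`, `𝓕ₙ = d·𝓕ₙ₋₁ + g·𝓕ₙ₋₂`. -/
noncomputable def GFPF (d g : ℝ → ℝ) : ℕ → ℝ → ℝ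
  | 0 => fun _ => 0
  | 1 => fun _ => 1
  | n + 2 => fun x => d x * GFPF d g (n + 1) x + g x * GFPF d g n x

lemma gfpf_aux (γ : ℝ) (hγ : 0 < γ) (d : ℝ → ℝ) (x : ℝ) :
    ∀ k : ℕ, γ ^ k ≤ GFPF d (fun _ => γ) (2 * k + 1) x ∧
      0 ≤ d x * GFPF d (fun _ => γ) (2 * k) x := by
  intro k
  induction k with
  | zero => simp [GFPF]
  | succ k ih =>
    obtain ⟨h1, h2⟩ := ih
    have hpos : 0 < GFPF d (fun _ => γ) (2 * k + 1) x :=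
      lt_of_lt_of_le (pow_pos hγ k) h1
    have e2 : GFPF d (fun _ => γ) (2 * (k + 1)) x =
        d x * GFPF d (fun _ => γ) (2 * k + 1) x + γ * GFPF d (fun _ => γ) (2 * k) x := by
      have : 2 * (k + 1) = 2 * k + 2 := by ring
      rw [this]; rfl
    have hd2 : 0 ≤ d x * GFPF d (fun _ => γ) (2 * (k + 1)) x := by
      rw [e2, mul_add]
      have : d x * (γ * GFPF d (fun _ => γ) (2 * k) x)
          = γ * (d x * GFPF d (fun _ => γ) (2 * k) x) := by ring
      nlinarith [mul_self_nonneg (d x), hpos.le, hγ.le, h2]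
    refine ⟨?_, hd2⟩
    have e3 : GFPF d (fun _ => γ) (2 * (k + 1) + 1) x =
        d x * GFPF d (fun _ => γ) (2 * (k + 1)) x + γ * GFPF d (fun _ => γ) (2 * k + 1) x := by
      have : 2 * (k + 1) + 1 = (2 * k + 1) + 2 := by ring
      rw [this]
      show d x * GFPF d (fun _ => γ) (2 * k + 1 + 1) x + γ * GFPF d (fun _ => γ) (2 * k + 1) x = _
      congr 3
    rw [e3]
    calc γ ^ (k + 1) = γ * γ ^ k := by ring
    _ ≤ γ * GFPF d (fun _ => γ) (2 * k + 1) x := by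
        exact mul_le_mul_of_nonneg_left h1 hγ.le
    _ ≤ _ := by linarith

theorem gfpf_odd_no_real_roots (γ : ℝ) (hγ : 0 < γ) (d : ℝ → ℝ)
    (n : ℕ) (hn1 : 1 ≤ n) (hnodd : Odd n) (x : ℝ) :
    γ ^ ((n - 1) / 2) ≤ GFPF d (fun _ => γ) n x ∧
    0 < γ ^ ((n - 1) / 2) ∧
    GFPF d (fun _ => γ) n x ≠ 0 := by
  obtain ⟨k, rfl⟩ := hnodd
  have hk : (2 * k + 1 - 1) / 2 = k := by omega
  rw [hk]
  have h := (gfpf_aux γ hγ d x k).1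
  have hp := pow_pos hγ k
  exact ⟨h, hp, by linarith⟩
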